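/- For every real irrational number ξ, the density exponent ν(ξ) takes only the value 0 or the value +∞; more precisely, ν(ξ) = +∞ if ξ is a Liouville number and ν(ξ) = 0 otherwise. -/

import Mathlib

open Filter Topology

/-- distance to the nearest integer -/
noncomputable def nd (x : ℝ) : ℝ := |x - round x|

lemma nd_nonneg (x : ℝ) : 0 ≤ nd x := abs_nonneg _

lemma nd_le (x : ℝ) (m : ℤ) : nd x ≤ |x - m| := round_le x m

lemma nd_add_int (x : ℝ) (m : ℤ) : nd (x + m) = nd x := by
  simp [nd, round_add_intCast]

lemma nd_neg (x : ℝ) : nd (-x) = nd x := by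
  apply le_antisymm
  · calc nd (-x) ≤ |(-x) - (-(round x) : ℤ)| := nd_le _ _
      _ = |x - round x| := by push_cast; rw [← abs_neg]; ring_nf
      _ = nd x := rfl
  · calc nd x ≤ |x - (-(round (-x)) : ℤ)| := nd_le _ _
      _ = |(-x) - round (-x)| := by push_cast; rw [← abs_neg]; ring_nf
      _ = nd (-x) := rfl

lemma nd_pos {ξ : ℝ} (hξ : Irrational ξ) {q : ℕ} (hq : 0 < q) : 0 < nd ((q : ℝ) * ξ) := by
  have h : Irrational ((q : ℝ) * ξ) := hξ.natCast_mul hq.ne'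
  have := h.ne_int (round ((q : ℝ) * ξ))
  exact abs_pos.mpr (sub_ne_zero.mpr this)

/-- positive-step walk lemma -/
lemma walk_pos (x γ A B : ℝ) (J : ℕ) (hγ : 0 < γ) (hw : γ ≤ B - A) (hA : 0 < A)
    (hB : B < 1/2) :
    ∃ j : ℕ, J ≤ j ∧ (j : ℝ) ≤ J + 2/γ + 2 ∧ A ≤ nd (x + j * γ) ∧ nd (x + j * γ) ≤ B := by
  set S : ℝ := x + J * γ with hS
  set n : ℤ := ⌈S - A⌉ with hn
  have hn1 : (n : ℝ) + A - S ≥ 0 := by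
    have := Int.le_ceil (S - A); rw [← hn] at this; linarith
  have hn2 : (n : ℝ) + A - S ≤ 1 := by
    have := Int.ceil_lt_add_one (S - A); rw [← hn] at this; linarith
  set j' : ℕ := ⌈((n : ℝ) + A - S)/γ⌉₊ with hj'
  have hj'1 : ((n : ℝ) + A - S)/γ ≤ (j' : ℝ) := Nat.le_ceil _
  have hj'2 : (j' : ℝ) ≤ ((n : ℝ) + A - S)/γ + 1 := by
    have h0 : 0 ≤ ((n : ℝ) + A - S)/γ := div_nonneg hn1 hγ.le
    exact (Nat.ceil_lt_add_one h0).le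
  have hz1 : (n : ℝ) + A ≤ S + j' * γ := by
    have := (div_le_iff₀ hγ).mp hj'1
    linarith
  have hz2 : S + j' * γ ≤ (n : ℝ) + A + γ := by
    have h := mul_le_mul_of_nonneg_right hj'2 hγ.le
    rw [add_mul, div_mul_cancel₀ _ hγ.ne'] at h
    linarith
  have hzB : S + j' * γ - n ≤ B := by linarith
  have hzA : A ≤ S + j' * γ - n := by linarith
  have hround : round (S + j' * γ) = n := by
    rw [round_eq]
    have h1 : (n : ℝ) ≤ S + j' * γ + 1/2 := by linarith
    have h2 : S + j' * γ + 1/2 < n + 1 := by linarith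
    rw [show (n : ℤ) = ⌊S + j' * γ + 1/2⌋ from (Int.floor_eq_iff.mpr ⟨h1, h2⟩).symm]
  have hnd : nd (S + j' * γ) = S + j' * γ - n := by
    rw [nd, hround, abs_of_nonneg (by linarith)]
  refine ⟨J + j', Nat.le_add_right _ _, ?_, ?_, ?_⟩
  · push_cast
    have h1γ : ((n : ℝ) + A - S)/γ ≤ 1/γ := by gcongr
    have h2γ : 1/γ ≤ 2/γ := by gcongr <;> norm_num
    linarith
  · have : x + (J + j' : ℕ) * γ = S + j' * γ := by push_cast; rw [hS]; ring
    rw [this, hnd]; exact hzA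
  · have : x + (J + j' : ℕ) * γ = S + j' * γ := by push_cast; rw [hS]; ring
    rw [this, hnd]; exact hzB

/-- signed-step walk lemma -/
lemma walk (x θ A B : ℝ) (J : ℕ) (hγ : 0 < nd θ) (hw : nd θ ≤ B - A) (hA : 0 < A)
    (hB : B < 1/2) :
    ∃ j : ℕ, J ≤ j ∧ (j : ℝ) ≤ J + 2/(nd θ) + 2 ∧ A ≤ nd (x + j * θ) ∧ nd (x + j * θ) ≤ B := by
  set σ : ℝ := θ - round θ with hσ
  have hndσ : nd θ = |σ| := rfl
  have hkey : ∀ j : ℕ, nd (x + j * θ) = nd (x + j * σ) := by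
    intro j
    have : x + j * θ = (x + j * σ) + ((j * round θ : ℤ) : ℝ) := by push_cast; rw [hσ]; ring
    rw [this, nd_add_int]
  rcases lt_or_gt_of_ne (fun h0 : σ = 0 => by simp [hndσ, h0] at hγ) with hneg | hpos
  · have habs : |σ| = -σ := abs_of_neg hneg
    obtain ⟨j, hj1, hj2, hj3, hj4⟩ := walk_pos (-x) (-σ) A B J (by rw [hndσ, habs] at hγ; exact hγ)
      (by rw [hndσ, habs] at hw; exact hw) hA hB
    refine ⟨j, hj1, by rw [hndσ, habs]; exact hj2, ?_, ?_⟩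
    · rw [hkey, show x + j * σ = -(-x + j * -σ) by ring, nd_neg]; exact hj3
    · rw [hkey, show x + j * σ = -(-x + j * -σ) by ring, nd_neg]; exact hj4
  · have habs : |σ| = σ := abs_of_pos hpos
    obtain ⟨j, hj1, hj2, hj3, hj4⟩ := walk_pos x σ A B J (by rwa [hndσ, habs] at hγ)
      (by rwa [hndσ, habs] at hw) hA hB
    exact ⟨j, hj1, by rwa [hndσ, habs], by rwa [hkey], by rwa [hkey]⟩

/-- Dirichlet wrapper -/
lemma dirichlet (ξ : ℝ) {w : ℝ} (hw : 0 < w) (hw1 : w ≤ 1) :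
    ∃ q : ℕ, 0 < q ∧ (q : ℝ) ≤ 2/w ∧ nd ((q : ℝ) * ξ) ≤ w := by
  have hn0 : 0 < ⌈1/w⌉₊ := by
    rw [Nat.lt_ceil]; push_cast; positivity
  obtain ⟨k, hk0, hk1, hk2⟩ := Real.exists_nat_abs_mul_sub_round_le ξ hn0
  have hceil : (1:ℝ)/w ≤ (⌈1/w⌉₊ : ℝ) := Nat.le_ceil _
  refine ⟨k, hk0, ?_, ?_⟩
  · have : (k : ℝ) ≤ (⌈1/w⌉₊ : ℝ) := by exact_mod_cast hk1
    have h2 : ((⌈1/w⌉₊ : ℕ) : ℝ) ≤ 1/w + 1 := by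
      have := Nat.ceil_lt_add_one (show (0:ℝ) ≤ 1/w by positivity)
      linarith [this.le]
    have h3 : 1/w + 1 ≤ 2/w := by
      rw [div_add' _ _ _ hw.ne', div_le_div_iff₀ hw hw]
      nlinarith
    linarith
  · refine le_trans hk2 ?_
    rw [div_le_iff₀ (by positivity), ← div_le_iff₀' hw]
    linarith

/-- uniform lower bound on nd (q ξ) from a Liouville-type bound valid for large q -/
lemma lower_bound_exists {ξ : ℝ} (hξ : Irrational ξ) (M Q1 : ℕ)
    (h : ∀ q : ℕ, Q1 ≤ q → 0 < q → 1/(q:ℝ)^M < nd ((q:ℝ) * ξ)) :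
    ∃ c : ℝ, 0 < c ∧ c ≤ 1 ∧ ∀ q : ℕ, 0 < q → c/(q:ℝ)^M ≤ nd ((q:ℝ) * ξ) := by
  set f : ℕ → ℝ := fun q => if q = 0 then 1 else nd ((q:ℝ) * ξ) with hf
  have hne : (Finset.range (Q1 + 1)).Nonempty := Finset.nonempty_range_iff.mpr (Nat.succ_ne_zero _)
  set c0 : ℝ := (Finset.range (Q1 + 1)).inf' hne f with hc0
  have hc0pos : 0 < c0 := by
    rw [hc0, Finset.lt_inf'_iff]
    intro q _
    by_cases hq : q = 0
    · simp [hf, hq]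
    · simpa [hf, hq] using nd_pos hξ (Nat.pos_of_ne_zero hq)
  refine ⟨min c0 1, lt_min hc0pos one_pos, min_le_right _ _, ?_⟩
  intro q hq
  have hqR : (1:ℝ) ≤ (q:ℝ) := by exact_mod_cast hq
  have hpow : (1:ℝ) ≤ (q:ℝ)^M := one_le_pow₀ hqR
  rcases le_or_gt q Q1 with hle | hlt
  · have hmem : q ∈ Finset.range (Q1 + 1) := Finset.mem_range.mpr (Nat.lt_succ_of_le hle)
    have : c0 ≤ f q := Finset.inf'_le f hmem
    rw [hf] at this
    simp only [if_neg hq.ne'] at this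
    calc min c0 1 / (q:ℝ)^M ≤ min c0 1 / 1 :=
          div_le_div_of_nonneg_left (le_min hc0pos.le zero_le_one) one_pos hpow
      _ = min c0 1 := div_one _
      _ ≤ c0 := min_le_left _ _
      _ ≤ nd ((q:ℝ)*ξ) := this
  · have := h q hlt.le hq
    calc min c0 1 / (q:ℝ)^M ≤ 1/(q:ℝ)^M := by gcongr; exact min_le_right _ _
      _ ≤ nd ((q:ℝ)*ξ) := (h q hlt.le hq).le

set_option maxHeartbeats 1000000 in
/-- One step of the construction: multiply `u` by roughly `G` while multiplying
`nd (u ξ)` by roughly `ρ`. -/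
lemma step_lemma {ξ : ℝ} (hξ : Irrational ξ) {M : ℕ} {c : ℝ} (hc0 : 0 < c) (hc1 : c ≤ 1)
    (hLB : ∀ q : ℕ, 0 < q → c/(q:ℝ)^M ≤ nd ((q:ℝ) * ξ))
    {ρ κ' G κ : ℝ} (hρ0 : 0 < ρ) (hρ1 : ρ < 1) (hκ'0 : 0 < κ') (hκ'1 : κ' < 1)
    (hG : 1 ≤ G) (hκ0 : 0 < κ)
    {u : ℕ} (hu : 0 < u) (hε4 : nd ((u:ℝ)*ξ) ≤ 1/4)
    (hbig : 10*2^M/(c*(ρ*κ'*nd ((u:ℝ)*ξ))^(M+1)) ≤ κ*G*(u:ℝ)) :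
    ∃ u' : ℕ, G*(u:ℝ) ≤ (u':ℝ) ∧ (u':ℝ) ≤ G*(1+κ)*(u:ℝ) ∧
      ρ*(1-κ')*nd ((u:ℝ)*ξ) ≤ nd ((u':ℝ)*ξ) ∧ nd ((u':ℝ)*ξ) ≤ ρ*nd ((u:ℝ)*ξ) := by
  set ε : ℝ := nd ((u:ℝ)*ξ) with hε
  have hε0 : 0 < ε := nd_pos hξ hu
  set w : ℝ := ρ*κ'*ε with hw
  have hw0 : 0 < w := by positivity
  have hw1 : w ≤ 1 := by
    rw [hw]; nlinarith [mul_pos hρ0 hκ'0]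
  obtain ⟨q, hq0, hq2w, hqw⟩ := dirichlet ξ hw0 hw1
  set γ : ℝ := nd ((q:ℝ)*ξ) with hγ
  have hγ0 : 0 < γ := nd_pos hξ hq0
  have hq0R : (0:ℝ) < q := by exact_mod_cast hq0
  have hγlb : c*w^M/2^M ≤ γ := by
    have h1 : c/(q:ℝ)^M ≤ γ := hLB q hq0
    have h2 : (q:ℝ)^M ≤ (2/w)^M := pow_le_pow_left₀ (le_of_lt hq0R) hq2w M
    have h3 : c/(2/w)^M ≤ c/(q:ℝ)^M :=
      div_le_div_of_nonneg_left hc0.le (pow_pos hq0R M) h2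
    have h4 : c/(2/w)^M = c*w^M/2^M := by
      rw [div_pow]
      field_simp
    linarith
  have hwM1 : (0:ℝ) < w^(M+1) := pow_pos hw0 _
  have h2M : (0:ℝ) < 2^M := by positivity
  set J : ℕ := ⌈(G-1)*(u:ℝ)/(q:ℝ)⌉₊ with hJ
  have hBA : ρ*ε - ρ*(1-κ')*ε = w := by rw [hw]; ring
  obtain ⟨j, hjJ, hjle, hndA, hndB⟩ := walk ((u:ℝ)*ξ) ((q:ℝ)*ξ) (ρ*(1-κ')*ε) (ρ*ε) J
    hγ0 (by rw [show ρ*ε - ρ*(1-κ')*ε = w from hBA]; exact hqw)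
    (by nlinarith) (by nlinarith)
  have harg : ((u:ℝ) + (j:ℝ)*(q:ℝ))*ξ = (u:ℝ)*ξ + (j:ℝ)*((q:ℝ)*ξ) := by ring
  refine ⟨u + j*q, ?_, ?_, ?_, ?_⟩
  · -- lower bound
    have hJq : (G-1)*(u:ℝ) ≤ (J:ℝ)*(q:ℝ) := by
      have := Nat.le_ceil ((G-1)*(u:ℝ)/(q:ℝ))
      rw [div_le_iff₀ hq0R] at this
      linarith
    have hjJ' : (J:ℝ) ≤ (j:ℝ) := by exact_mod_cast hjJ
    have hjq' : (J:ℝ)*(q:ℝ) ≤ (j:ℝ)*(q:ℝ) := mul_le_mul_of_nonneg_right hjJ' hq0R.le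
    push_cast
    linarith
  · -- upper bound
    have hJle : (J:ℝ) ≤ (G-1)*(u:ℝ)/(q:ℝ) + 1 := by
      have h0 : (0:ℝ) ≤ (G-1)*(u:ℝ)/(q:ℝ) := by
        apply div_nonneg ?_ hq0R.le
        have h00 : (0:ℝ) ≤ (u:ℝ) := Nat.cast_nonneg u
        nlinarith
      exact (Nat.ceil_lt_add_one h0).le
    have hqwm : (q:ℝ)*w ≤ 2 := (le_div_iff₀ hw0).mp hq2w
    have hγ2 : c*w^M ≤ γ*2^M := (div_le_iff₀ h2M).mp hγlb
    have hcwM : c*w^M ≤ 1 := by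
      have : w^M ≤ 1 := pow_le_one₀ hw0.le hw1
      nlinarith
    have hqγ : (q:ℝ)*(1/γ) ≤ 2*2^M/(c*w^(M+1)) := by
      rw [mul_one_div, div_le_div_iff₀ hγ0 (by positivity)]
      have e1 : (q:ℝ)*(c*w^(M+1)) ≤ 2*(c*w^M) := by
        rw [pow_succ]
        nlinarith [mul_pos hc0 (pow_pos hw0 M)]
      nlinarith
    have h3q : 3*(q:ℝ) ≤ 6*2^M/(c*w^(M+1)) := by
      have e2 : 3*(q:ℝ) ≤ 6/w := by
        rw [le_div_iff₀ hw0]; nlinarith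
      have e3 : 6/w ≤ 6*2^M/(c*w^(M+1)) := by
        rw [div_le_div_iff₀ hw0 (by positivity), pow_succ]
        have h1le : (1:ℝ) ≤ 2^M := one_le_pow₀ (by norm_num)
        nlinarith [mul_pos hw0 h2M]
      linarith
    have hsum : 3*(q:ℝ) + 2*((q:ℝ)*(1/γ)) ≤ κ*G*(u:ℝ) := by
      have hb : 10*2^M/(c*w^(M+1)) ≤ κ*G*(u:ℝ) := hbig
      have e4 : 2*(2*2^M/(c*w^(M+1))) + 6*2^M/(c*w^(M+1)) = 10*2^M/(c*w^(M+1)) := by ring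
      linarith
    have hjqle : (j:ℝ)*(q:ℝ) ≤ ((J:ℝ) + 2*(1/γ) + 2)*(q:ℝ) := by
      have hj2 : (j:ℝ) ≤ (J:ℝ) + 2*(1/γ) + 2 := by
        rw [show (2:ℝ)*(1/γ) = 2/γ by ring]; exact hjle
      exact mul_le_mul_of_nonneg_right hj2 hq0R.le
    have eJ : ((G-1)*(u:ℝ)/(q:ℝ) + 1)*(q:ℝ) = (G-1)*(u:ℝ) + (q:ℝ) := by field_simp
    have hJq2 : (J:ℝ)*(q:ℝ) ≤ (G-1)*(u:ℝ) + (q:ℝ) := by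
      have h6 := mul_le_mul_of_nonneg_right hJle hq0R.le
      rw [eJ] at h6; exact h6
    have expand : ((J:ℝ) + 2*(1/γ) + 2)*(q:ℝ)
        = (J:ℝ)*(q:ℝ) + 2*((q:ℝ)*(1/γ)) + 2*(q:ℝ) := by ring
    have ering : G*(1+κ)*(u:ℝ) = (G-1)*(u:ℝ) + (u:ℝ) + κ*(G*(u:ℝ)) := by ring
    have ering2 : κ*(G*(u:ℝ)) = κ*G*(u:ℝ) := by ring
    rw [expand] at hjqle
    push_cast
    linarith
  · push_cast
    rw [harg]
    exact hndA
  · push_cast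
    rw [harg]
    exact hndB

/-- initial point for the construction -/
lemma init_lemma {ξ : ℝ} (hξ : Irrational ξ) (V : ℝ) :
    ∃ u : ℕ, 0 < u ∧ V ≤ (u:ℝ) ∧ 1/8 ≤ nd ((u:ℝ)*ξ) ∧ nd ((u:ℝ)*ξ) ≤ 1/4 := by
  obtain ⟨q, hq0, hq2w, hqw⟩ := dirichlet ξ (show (0:ℝ) < 1/8 by norm_num) (by norm_num)
  have hq0R : (0:ℝ) < q := by exact_mod_cast hq0
  have hq1 : (1:ℝ) ≤ q := by exact_mod_cast hq0
  obtain ⟨j, hjJ, hjle, hndA, hndB⟩ := walk 0 ((q:ℝ)*ξ) (1/8) (1/4) (⌈V⌉₊ + 1)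
    (nd_pos hξ hq0) (by norm_num at hqw ⊢; linarith) (by norm_num) (by norm_num)
  have hj1 : 1 ≤ j := le_trans (Nat.le_add_left 1 ⌈V⌉₊) hjJ
  have harg : (0:ℝ) + (j:ℝ)*((q:ℝ)*ξ) = ((j*q : ℕ):ℝ)*ξ := by push_cast; ring
  refine ⟨j*q, Nat.mul_pos hj1 hq0, ?_, ?_, ?_⟩
  · have h1 : V ≤ (⌈V⌉₊ : ℝ) + 1 := by
      have := Nat.le_ceil V; linarith
    have h2 : ((⌈V⌉₊ + 1 : ℕ):ℝ) ≤ (j:ℝ) := by exact_mod_cast hjJ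
    have h3 : (j:ℝ) ≤ (j:ℝ)*(q:ℝ) := by nlinarith [Nat.cast_nonneg (α := ℝ) j]
    push_cast at h2 ⊢
    linarith
  · rw [← harg]; exact hndA
  · rw [← harg]; exact hndB

set_option maxHeartbeats 1000000 in
/-- The full construction of a geometric-type approximating sequence. -/
lemma construction {ξ : ℝ} (hξ : Irrational ξ) {M : ℕ} {c : ℝ} (hc0 : 0 < c) (hc1 : c ≤ 1)
    (hLB : ∀ q : ℕ, 0 < q → c/(q:ℝ)^M ≤ nd ((q:ℝ) * ξ))
    {ρ κ' κ : ℝ} (hρ0 : 0 < ρ) (hρ1 : ρ < 1) (hκ'0 : 0 < κ') (hκ'1 : κ' < 1) (hκ0 : 0 < κ) :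
    ∃ u : ℕ → ℕ, Monotone u ∧ (∀ n, 0 < u n) ∧
      (∀ n, nd ((u (n+1):ℝ)*ξ) ≤ ρ * nd ((u n:ℝ)*ξ)) ∧
      (∀ n, (u (n+1):ℝ) ≤ ((1/(ρ*(1-κ')))^(M+1)*(1+κ)) * (u n:ℝ)) := by
  set K : ℕ := M + 1 with hK
  have hx0 : 0 < ρ*(1-κ') := by nlinarith
  have hx1 : ρ*(1-κ') ≤ 1 := by nlinarith
  set G : ℝ := (1/(ρ*(1-κ')))^K with hGdef
  have hG0 : 0 < G := by positivity
  have hG1 : 1 ≤ G := by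
    apply one_le_pow₀
    rw [le_div_iff₀ hx0]; linarith
  have hGx : G*(ρ*(1-κ'))^K = 1 := by
    rw [hGdef, ← mul_pow, one_div, inv_mul_cancel₀ hx0.ne', one_pow]
  set C1 : ℝ := 10*2^M/(c*κ*G*(ρ*κ')^K) with hC1
  have hC1pos : 0 < C1 := by positivity
  set Good : ℕ → Prop := fun v => 0 < v ∧ nd ((v:ℝ)*ξ) ≤ 1/4 ∧ C1 ≤ (v:ℝ)*nd ((v:ℝ)*ξ)^K
    with hGood
  have hstep : ∀ v : ℕ, Good v → ∃ v' : ℕ, Good v' ∧ (v:ℝ) ≤ (v':ℝ) ∧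
      ((v':ℝ) ≤ G*(1+κ)*(v:ℝ)) ∧ nd ((v':ℝ)*ξ) ≤ ρ*nd ((v:ℝ)*ξ) := by
    rintro v ⟨hv0, hv4, hvinv⟩
    have hεv : 0 < nd ((v:ℝ)*ξ) := nd_pos hξ hv0
    set ε : ℝ := nd ((v:ℝ)*ξ) with hεdef
    have hD : (0:ℝ) < c*κ*G*(ρ*κ')^K := by positivity
    have hbig : 10*2^M/(c*(ρ*κ'*ε)^K) ≤ κ*G*(v:ℝ) := by
      have e : (ρ*κ'*ε)^K = (ρ*κ')^K*ε^K := mul_pow _ _ _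
      rw [e, div_le_iff₀ (by positivity)]
      have eC : C1*(c*κ*G*(ρ*κ')^K) = 10*2^M := div_mul_cancel₀ _ hD.ne'
      have hmul := mul_le_mul_of_nonneg_right hvinv hD.le
      nlinarith [hmul, eC]
    obtain ⟨v', h1, h2, h3, h4⟩ := step_lemma hξ hc0 hc1 hLB hρ0 hρ1 hκ'0 hκ'1 hG1 hκ0 hv0 hv4 hbig
    have hv'0 : 0 < v' := by
      have : (0:ℝ) < (v':ℝ) := by
        have : (1:ℝ) ≤ (v:ℝ) := by exact_mod_cast hv0
        nlinarith
      exact_mod_cast this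
    have hεv' : 0 < nd ((v':ℝ)*ξ) := nd_pos hξ hv'0
    refine ⟨v', ⟨hv'0, by nlinarith, ?_⟩, ?_, h2, h4⟩
    · -- invariant preserved
      have hpow : (ρ*(1-κ')*ε)^K ≤ nd ((v':ℝ)*ξ)^K := by
        apply pow_le_pow_left₀ (by positivity) h3
      have e2 : (ρ*(1-κ')*ε)^K = (ρ*(1-κ'))^K*ε^K := mul_pow _ _ _
      have hvc : (0:ℝ) < (v:ℝ) := by exact_mod_cast hv0
      have key : (v:ℝ)*ε^K ≤ (v':ℝ)*nd ((v':ℝ)*ξ)^K := by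
        calc (v:ℝ)*ε^K = G*(v:ℝ)*((ρ*(1-κ'))^K*ε^K) := by
              rw [show G*(v:ℝ)*((ρ*(1-κ'))^K*ε^K) = (G*(ρ*(1-κ'))^K)*((v:ℝ)*ε^K) by ring,
                hGx, one_mul]
          _ ≤ (v':ℝ)*((ρ*(1-κ'))^K*ε^K) := by
              apply mul_le_mul_of_nonneg_right h1 (by positivity)
          _ ≤ (v':ℝ)*nd ((v':ℝ)*ξ)^K := by
              apply mul_le_mul_of_nonneg_left ?_ (by positivity)
              rw [← e2]; exact hpow
      linarith
    · have : (1:ℝ)*(v:ℝ) ≤ G*(v:ℝ) := by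
        apply mul_le_mul_of_nonneg_right hG1 (Nat.cast_nonneg v)
      linarith
  obtain ⟨u₀, hu₀pos, hu₀V, hu₀lb, hu₀ub⟩ := init_lemma hξ (C1*8^K)
  have hu₀good : Good u₀ := by
    refine ⟨hu₀pos, hu₀ub, ?_⟩
    have hp : ((1:ℝ)/8)^K ≤ nd ((u₀:ℝ)*ξ)^K := by
      apply pow_le_pow_left₀ (by norm_num) hu₀lb
    have e8 : (C1*8^K)*((1:ℝ)/8)^K = C1 := by
      rw [mul_assoc, ← mul_pow]; norm_num
    calc C1 = (C1*8^K)*((1:ℝ)/8)^K := e8.symm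
      _ ≤ (u₀:ℝ)*((1:ℝ)/8)^K := by
          apply mul_le_mul_of_nonneg_right hu₀V (by positivity)
      _ ≤ (u₀:ℝ)*nd ((u₀:ℝ)*ξ)^K := by
          apply mul_le_mul_of_nonneg_left hp (Nat.cast_nonneg u₀)
  choose f hf using hstep
  let seq : ℕ → {v : ℕ // Good v} := fun n =>
    Nat.rec (motive := fun _ => {v : ℕ // Good v}) ⟨u₀, hu₀good⟩
      (fun _ p => ⟨f p.1 p.2, (hf p.1 p.2).1⟩) n
  have hseq : ∀ n, (seq (n+1)).1 = f (seq n).1 (seq n).2 := fun n => rfl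
  have hrel : ∀ n, ((seq n).1:ℝ) ≤ ((seq (n+1)).1:ℝ) ∧
      (((seq (n+1)).1:ℝ) ≤ G*(1+κ)*((seq n).1:ℝ)) ∧
      nd (((seq (n+1)).1:ℝ)*ξ) ≤ ρ*nd (((seq n).1:ℝ)*ξ) := by
    intro n
    rw [hseq n]
    exact (hf (seq n).1 (seq n).2).2
  refine ⟨fun n => (seq n).1, ?_, ?_, ?_, ?_⟩
  · apply monotone_nat_of_le_succ
    intro n
    exact_mod_cast (hrel n).1
  · intro n; exact (seq n).2.1
  · intro n; exact (hrel n).2.2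
  · intro n; exact (hrel n).2.1

/-- The irrationality exponent of a real number, as an extended real:
the infimum of all real `μ` such that `|ξ - p/q| > 1/q^μ` for all integers `p, q`
with `q` sufficiently large (`⊤` if no such real `μ` exists). -/
noncomputable def irrationalityExponent (ξ : ℝ) : EReal :=
  sInf {x : EReal | ∃ μ : ℝ, x = (μ : EReal) ∧
    ∀ᶠ q : ℕ in atTop, ∀ p : ℤ, |ξ - (p : ℝ) / (q : ℝ)| > 1 / (q : ℝ) ^ μ}

/-- `α_ξ(u)`: the limsup of `|u_{n+1} ξ - v_{n+1}| / |u_n ξ - v_n|`, where `v_n` is the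
nearest integer to `u_n ξ`, computed in the extended reals. -/
noncomputable def alphaExp (ξ : ℝ) (u : ℕ → ℕ) : EReal :=
  limsup (fun n =>
    ((|(u (n + 1) : ℝ) * ξ - (round ((u (n + 1) : ℝ) * ξ) : ℝ)| /
      |(u n : ℝ) * ξ - (round ((u n : ℝ) * ξ) : ℝ)| : ℝ) : EReal)) atTop

/-- `β(u)`: the limsup of `u_{n+1} / u_n`, computed in the extended reals. -/
noncomputable def betaExp (u : ℕ → ℕ) : EReal :=
  limsup (fun n => (((u (n + 1) : ℝ) / (u n : ℝ) : ℝ) : EReal)) atTop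

/-- The density exponent `ν(ξ)`: the infimum of `log √(α_ξ(u) β(u))` over all
non-decreasing sequences `u` of positive integers with `α_ξ(u) < 1` and `β(u) < +∞`
(`⊤` if there is no such sequence). -/
noncomputable def densityExponent (ξ : ℝ) : EReal :=
  sInf {x : EReal | ∃ u : ℕ → ℕ, Monotone u ∧ (∀ n, 0 < u n) ∧
    alphaExp ξ u < 1 ∧ betaExp u < ⊤ ∧
    x = ((Real.log (Real.sqrt ((alphaExp ξ u).toReal * (betaExp u).toReal)) : ℝ) : EReal)}

lemma alphaExp_eq (ξ : ℝ) (u : ℕ → ℕ) :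
    alphaExp ξ u = limsup (fun n =>
      ((nd ((u (n+1):ℝ)*ξ) / nd ((u n:ℝ)*ξ) : ℝ) : EReal)) atTop := rfl

lemma limsup_coe_le {f : ℕ → ℝ} {b : ℝ} (h : ∀ n, f n ≤ b) :
    limsup (fun n => ((f n : ℝ) : EReal)) atTop ≤ (b : EReal) :=
  limsup_le_of_le (by isBoundedDefault)
    (Eventually.of_forall fun n => EReal.coe_le_coe_iff.mpr (h n))

lemma le_limsup_coe {f : ℕ → ℝ} {b : ℝ} (h : ∀ n, b ≤ f n) :
    (b : EReal) ≤ limsup (fun n => ((f n : ℝ) : EReal)) atTop :=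
  le_limsup_of_frequently_le
    (Frequently.of_forall fun n => EReal.coe_le_coe_iff.mpr (h n)) (by isBoundedDefault)

lemma ev_lt_of_limsup_lt {f : ℕ → ℝ} {b : ℝ}
    (h : limsup (fun n => ((f n : ℝ) : EReal)) atTop < (b : EReal)) :
    ∀ᶠ n in atTop, f n < b := by
  have h2 := eventually_lt_of_limsup_lt h
  filter_upwards [h2] with n hn
  exact_mod_cast hn

/-- Extraction of eventual geometric bounds from membership data. -/
lemma extract {ξ : ℝ} (hξ : Irrational ξ) {u : ℕ → ℕ} (hm : Monotone u) (hp : ∀ n, 0 < u n)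
    (hα : alphaExp ξ u < 1) (hβ : betaExp u < ⊤) :
    ∃ r b : ℝ, 0 < r ∧ r < 1 ∧ 1 < b ∧ ∃ N : ℕ, ∀ n, N ≤ n →
      nd ((u (n+1):ℝ)*ξ) ≤ r * nd ((u n:ℝ)*ξ) ∧ ((u (n+1)):ℝ) ≤ b * (u n:ℝ) := by
  have hεpos : ∀ n, 0 < nd ((u n:ℝ)*ξ) := fun n => nd_pos hξ (hp n)
  have hupos : ∀ n, (0:ℝ) < (u n:ℝ) := fun n => by exact_mod_cast hp n
  rw [alphaExp_eq] at hα
  have h0α : ((0:ℝ) : EReal) ≤ limsup (fun n =>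
      ((nd ((u (n+1):ℝ)*ξ) / nd ((u n:ℝ)*ξ) : ℝ) : EReal)) atTop :=
    le_limsup_coe fun n => div_nonneg (nd_nonneg _) (nd_nonneg _)
  obtain ⟨r, hαr, hr1⟩ := EReal.lt_iff_exists_real_btwn.mp hα
  have hr1R : r < 1 := by exact_mod_cast hr1
  have hr0 : 0 < r := by
    have : ((0:ℝ):EReal) < (r:EReal) := lt_of_le_of_lt h0α hαr
    exact_mod_cast this
  have h1β : ((1:ℝ) : EReal) ≤ limsup (fun n => (((u (n+1):ℝ) / (u n:ℝ) : ℝ) : EReal)) atTop :=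
    le_limsup_coe fun n => (one_le_div (hupos n)).mpr (by exact_mod_cast hm (Nat.le_succ n))
  obtain ⟨b, hβb, _⟩ := EReal.lt_iff_exists_real_btwn.mp hβ
  have hb1 : 1 < b := by
    have : ((1:ℝ):EReal) < (b:EReal) := lt_of_le_of_lt h1β hβb
    exact_mod_cast this
  have hev1 := ev_lt_of_limsup_lt hαr
  have hev2 := ev_lt_of_limsup_lt hβb
  obtain ⟨N, hN⟩ := eventually_atTop.mp (hev1.and hev2)
  refine ⟨r, b, hr0, hr1R, hb1, N, fun n hn => ?_⟩
  obtain ⟨h1, h2⟩ := hN n hn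
  exact ⟨((div_lt_iff₀ (hεpos n)).mp h1).le, ((div_lt_iff₀ (hupos n)).mp h2).le⟩

set_option maxHeartbeats 1000000 in
/-- A good sequence forces a finite irrationality exponent. -/
lemma exists_mu {ξ : ℝ} (hξ : Irrational ξ) {u : ℕ → ℕ} (hm : Monotone u) (hp : ∀ n, 0 < u n)
    (hα : alphaExp ξ u < 1) (hβ : betaExp u < ⊤) :
    ∃ μ : ℝ, ∀ᶠ q : ℕ in atTop, ∀ p : ℤ, |ξ - (p:ℝ)/(q:ℝ)| > 1/(q:ℝ)^μ := by
  obtain ⟨r, b, hr0, hr1, hb1, N, hN⟩ := extract hξ hm hp hα hβ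
  set ε : ℕ → ℝ := fun n => nd ((u n:ℝ)*ξ) with hεdef
  set v : ℕ → ℤ := fun n => round ((u n:ℝ)*ξ) with hvdef
  have hεpos : ∀ n, 0 < ε n := fun n => nd_pos hξ (hp n)
  have hupos : ∀ n, (0:ℝ) < (u n:ℝ) := fun n => by exact_mod_cast hp n
  have hgeom : ∀ k, ε (N+k) ≤ r^k * ε N := by
    intro k
    induction k with
    | zero => simp
    | succ k ih =>
        have h1 := (hN (N+k) (Nat.le_add_right _ _)).1
        calc ε (N+k+1) ≤ r * ε (N+k) := h1
          _ ≤ r * (r^k * ε N) := by nlinarith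
          _ = r^(k+1) * ε N := by ring
  have hugeom : ∀ k, (u (N+k):ℝ) ≤ b^k * (u N:ℝ) := by
    intro k
    induction k with
    | zero => simp
    | succ k ih =>
        have h1 := (hN (N+k) (Nat.le_add_right _ _)).2
        have hbk : (0:ℝ) < b^k := by positivity
        calc (u (N+k+1):ℝ) ≤ b * (u (N+k):ℝ) := h1
          _ ≤ b * (b^k * (u N:ℝ)) := by nlinarith
          _ = b^(k+1) * (u N:ℝ) := by ring
  have hlr : 0 < -Real.log r := by
    have := Real.log_neg hr0 hr1; linarith
  have hlb : 0 < Real.log b := Real.log_pos hb1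
  set τ : ℝ := Real.log b / (-Real.log r) with hτ
  have hτ0 : 0 ≤ τ := by positivity
  set D : ℝ := b^2*(u N:ℝ)*(4*ε N)^τ with hD
  have hb0 : (0:ℝ) < b := by linarith
  have hDpos : 0 < D := by
    have hX : (0:ℝ) < (4*ε N)^τ := Real.rpow_pos_of_pos (by nlinarith [hεpos N]) τ
    exact mul_pos (mul_pos (pow_pos hb0 2) (hupos N)) hX
  obtain ⟨Q, hQ⟩ := exists_nat_gt (max (1/(4*ε N)) (4*D/3))
  refine ⟨τ + 2, eventually_atTop.mpr ⟨Q + 1, fun q hq => ?_⟩⟩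
  intro p
  have hq1 : 1 ≤ q := le_trans (Nat.le_add_left 1 Q) hq
  have hqR : (1:ℝ) ≤ (q:ℝ) := by exact_mod_cast hq1
  have hq0R : (0:ℝ) < (q:ℝ) := by linarith
  have hqQ : (Q:ℝ) ≤ (q:ℝ) := by exact_mod_cast le_trans (Nat.le_add_right Q 1) hq
  have hqεN : 1/(4*(q:ℝ)) < ε N := by
    have h1 : 1/(4*ε N) < (q:ℝ) := lt_of_lt_of_le (lt_of_le_of_lt (le_max_left _ _) hQ) hqQ
    rw [div_lt_iff₀ (by nlinarith [hεpos N])] at h1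
    rw [div_lt_iff₀ (by nlinarith)]
    nlinarith [hεpos N]
  have hqD : 4*D/3 < (q:ℝ) := lt_of_lt_of_le (lt_of_le_of_lt (le_max_right _ _) hQ) hqQ
  -- find the first k with ε (N+k) < 1/(4q)
  have hex : ∃ k, ε (N+k) < 1/(4*(q:ℝ)) := by
    obtain ⟨k, hk⟩ := exists_pow_lt_of_lt_one
      (div_pos (show (0:ℝ) < 1/(4*(q:ℝ)) by positivity) (hεpos N)) hr1
    exact ⟨k, lt_of_le_of_lt (hgeom k) ((lt_div_iff₀ (hεpos N)).mp hk)⟩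
  set k := Nat.find hex with hkdef
  have hk : ε (N+k) < 1/(4*(q:ℝ)) := Nat.find_spec hex
  have hk0 : k ≠ 0 := by
    intro h0
    rw [h0] at hk
    simp only [Nat.add_zero] at hk
    linarith
  have hkm : ¬ (ε (N + (k-1)) < 1/(4*(q:ℝ))) :=
    Nat.find_min hex (Nat.pred_lt hk0)
  have hmk : (k-1) + 1 = k := Nat.succ_pred_eq_of_ne_zero hk0
  -- bound u (N+k+1) by D * q^τ
  have hbound : (u (N+k+1):ℝ) ≤ D * (q:ℝ)^τ := by
    set m : ℕ := k - 1 with hmdef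
    have h4qε : (0:ℝ) < 4*(q:ℝ)*ε N := by nlinarith [hεpos N]
    have hX0 : (0:ℝ) < 1/(4*(q:ℝ)*ε N) := by rw [one_div]; exact inv_pos.mpr h4qε
    have h1 : 1/(4*(q:ℝ)) ≤ r^m * ε N := le_trans (not_lt.mp hkm) (hgeom m)
    have hXr : 1/(4*(q:ℝ)*ε N) ≤ r^m := by
      rw [show 4*(q:ℝ)*ε N = (4*(q:ℝ))*ε N by ring, ← div_div, div_le_iff₀ (hεpos N)]
      linarith
    have hlog := Real.log_le_log hX0 hXr
    rw [Real.log_pow, one_div, Real.log_inv] at hlog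
    -- hlog : -log (4 q εN) ≤ m * log r
    have hL : (m:ℝ)*(-Real.log r) ≤ Real.log (4*(q:ℝ)*ε N) := by linarith
    have hmlogb : (m:ℝ)*Real.log b ≤ τ * Real.log (4*(q:ℝ)*ε N) := by
      have e1 : Real.log b = τ*(-Real.log r) := by
        rw [hτ, div_mul_cancel₀ _ hlr.ne']
      calc (m:ℝ)*Real.log b = τ*((m:ℝ)*(-Real.log r)) := by rw [e1]; ring
        _ ≤ τ * Real.log (4*(q:ℝ)*ε N) := by
            apply mul_le_mul_of_nonneg_left hL hτ0
    have hbm : b^m ≤ (4*ε N)^τ * (q:ℝ)^τ := by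
      have e2 : b^m = Real.exp ((m:ℝ)*Real.log b) := by
        rw [← Real.log_pow, Real.exp_log (pow_pos hb0 m)]
      have e3 : (4*(q:ℝ)*ε N)^τ = Real.exp (Real.log (4*(q:ℝ)*ε N) * τ) :=
        Real.rpow_def_of_pos h4qε τ
      have e4 : (4*(q:ℝ)*ε N)^τ = (4*ε N)^τ * (q:ℝ)^τ := by
        rw [show 4*(q:ℝ)*ε N = (4*ε N)*(q:ℝ) by ring]
        exact Real.mul_rpow (by nlinarith [hεpos N]) hq0R.le
      calc b^m = Real.exp ((m:ℝ)*Real.log b) := e2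
        _ ≤ Real.exp (Real.log (4*(q:ℝ)*ε N) * τ) := by
            apply Real.exp_le_exp.mpr; linarith
        _ = (4*(q:ℝ)*ε N)^τ := e3.symm
        _ = (4*ε N)^τ * (q:ℝ)^τ := e4
    have hk1m : k + 1 = m + 2 := by omega
    have hqτpos : (0:ℝ) < (q:ℝ)^τ := Real.rpow_pos_of_pos hq0R τ
    have h4ετpos : (0:ℝ) < (4*ε N)^τ := Real.rpow_pos_of_pos (by nlinarith [hεpos N]) τ
    calc (u (N+k+1):ℝ) = (u (N+(k+1)):ℝ) := by rw [← Nat.add_assoc]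
      _ ≤ b^(k+1) * (u N:ℝ) := hugeom (k+1)
      _ = b^2 * (u N:ℝ) * b^m := by rw [hk1m, pow_add]; ring
      _ ≤ b^2 * (u N:ℝ) * ((4*ε N)^τ * (q:ℝ)^τ) := by
          apply mul_le_mul_of_nonneg_left hbm
          positivity
      _ = D * (q:ℝ)^τ := by rw [hD]; ring
  have hbound' : (u (N+k):ℝ) ≤ D * (q:ℝ)^τ := by
    refine le_trans ?_ hbound
    exact_mod_cast hm (Nat.le_succ (N+k))
  have hεk1 : ε (N+k+1) < 1/(4*(q:ℝ)) := by
    have h1 := (hN (N+k) (Nat.le_add_right _ _)).1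
    have := hεpos (N+k)
    calc ε (N+k+1) ≤ r * ε (N+k) := h1
      _ < 1 * ε (N+k) := by nlinarith
      _ < 1/(4*(q:ℝ)) := by rw [one_mul]; exact hk
  -- the main estimate, valid whenever the determinant at index i does not vanish
  have hεabs : ∀ i : ℕ, ε i = |(u i:ℝ)*ξ - ((v i:ℤ):ℝ)| := fun i => rfl
  have main : ∀ i : ℕ, ε i < 1/(4*(q:ℝ)) → (u i:ℝ) ≤ D*(q:ℝ)^τ →
      p*((u i : ℕ):ℤ) - (q:ℤ)*(v i) ≠ 0 → |ξ - (p:ℝ)/(q:ℝ)| > 1/(q:ℝ)^(τ+2) := by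
    intro i hεi hui hdi
    have hU0 : (0:ℝ) < (u i:ℝ) := hupos i
    have hne : (v i)*(q:ℤ) - p*((u i:ℕ):ℤ) ≠ 0 := by
      intro h; apply hdi; linear_combination -h
    have h1le : (1:ℝ) ≤ |(((v i)*(q:ℤ) - p*((u i:ℕ):ℤ) : ℤ):ℝ)| := by
      have := Int.one_le_abs hne
      exact_mod_cast this
    have htri : |((v i:ℤ):ℝ)/(u i:ℝ) - (p:ℝ)/(q:ℝ)| ≤
        |((v i:ℤ):ℝ)/(u i:ℝ) - ξ| + |ξ - (p:ℝ)/(q:ℝ)| := abs_sub_le _ _ _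
    have heq1 : ((v i:ℤ):ℝ)/(u i:ℝ) - (p:ℝ)/(q:ℝ)
        = (((v i)*(q:ℤ) - p*((u i:ℕ):ℤ) : ℤ):ℝ)/((u i:ℝ)*(q:ℝ)) := by
      push_cast
      field_simp
    have hnum : 1/((u i:ℝ)*(q:ℝ)) ≤ |((v i:ℤ):ℝ)/(u i:ℝ) - (p:ℝ)/(q:ℝ)| := by
      rw [heq1, abs_div, abs_of_pos (by positivity : (0:ℝ) < (u i:ℝ)*(q:ℝ))]
      gcongr
    have heq2 : |((v i:ℤ):ℝ)/(u i:ℝ) - ξ| = ε i / (u i:ℝ) := by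
      rw [abs_sub_comm, hεabs i, show ξ - ((v i:ℤ):ℝ)/(u i:ℝ)
        = ((u i:ℝ)*ξ - ((v i:ℤ):ℝ))/(u i:ℝ) by field_simp, abs_div, abs_of_pos hU0]
    have hεdiv : ε i/(u i:ℝ) < (1/(4*(q:ℝ)))/(u i:ℝ) := by gcongr
    have hqτpos : (0:ℝ) < (q:ℝ)^τ := Real.rpow_pos_of_pos hq0R τ
    have hcomb : (1:ℝ)/((u i:ℝ)*(q:ℝ)) - (1/(4*(q:ℝ)))/(u i:ℝ)
        = (3/4)/((u i:ℝ)*(q:ℝ)) := by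
      field_simp
      ring
    have hfinal : (1:ℝ)/(q:ℝ)^(τ+2) < (3/4)/((u i:ℝ)*(q:ℝ)) := by
      rw [div_lt_div_iff₀ (by positivity) (by positivity)]
      have e2 : (q:ℝ)^(τ+(2:ℝ)) = (q:ℝ)^τ * (q:ℝ)^(2:ℕ) := by
        rw [Real.rpow_add hq0R]
        congr 1
        rw [← Real.rpow_natCast (q:ℝ) 2]
        norm_num
      rw [e2]
      have hUq : (u i:ℝ)*(q:ℝ) ≤ (D*(q:ℝ)^τ)*(q:ℝ) := by nlinarith
      have hDq : D*(q:ℝ)^τ*(q:ℝ) < ((3:ℝ)/4)*((q:ℝ)^τ*(q:ℝ)^(2:ℕ)) := by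
        have h34 : D < (3/4)*(q:ℝ) := by linarith
        have hpos2 : (0:ℝ) < (q:ℝ)^τ*(q:ℝ) := by positivity
        calc D*(q:ℝ)^τ*(q:ℝ) = D*((q:ℝ)^τ*(q:ℝ)) := by ring
          _ < ((3/4)*(q:ℝ))*((q:ℝ)^τ*(q:ℝ)) := by
              apply mul_lt_mul_of_pos_right h34 hpos2
          _ = ((3:ℝ)/4)*((q:ℝ)^τ*(q:ℝ)^(2:ℕ)) := by ring
      nlinarith
    have := hεpos i
    calc 1/(q:ℝ)^(τ+2) < (3/4)/((u i:ℝ)*(q:ℝ)) := hfinal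
      _ = 1/((u i:ℝ)*(q:ℝ)) - (1/(4*(q:ℝ)))/(u i:ℝ) := hcomb.symm
      _ < |((v i:ℤ):ℝ)/(u i:ℝ) - (p:ℝ)/(q:ℝ)| - |((v i:ℤ):ℝ)/(u i:ℝ) - ξ| := by
          rw [heq2]; linarith
      _ ≤ |ξ - (p:ℝ)/(q:ℝ)| := by linarith
  by_cases hd : p*((u (N+k) : ℕ):ℤ) - (q:ℤ)*(v (N+k)) = 0 ∧
      p*((u (N+k+1) : ℕ):ℤ) - (q:ℤ)*(v (N+k+1)) = 0
  · exfalso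
    obtain ⟨hd1, hd2⟩ := hd
    have hd1' : p*((u (N+k):ℕ):ℤ) = (q:ℤ)*(v (N+k)) := by linear_combination hd1
    have hd2' : p*((u (N+k+1):ℕ):ℤ) = (q:ℤ)*(v (N+k+1)) := by linear_combination hd2
    have hqZ : (q:ℤ) ≠ 0 := by positivity
    have huv : ((u (N+k):ℕ):ℤ)*(v (N+k+1)) = ((u (N+k+1):ℕ):ℤ)*(v (N+k)) := by
      have h3 : (q:ℤ)*(((u (N+k):ℕ):ℤ)*(v (N+k+1)) - ((u (N+k+1):ℕ):ℤ)*(v (N+k))) = 0 := by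
        linear_combination ((u (N+k+1):ℕ):ℤ)*hd1' - ((u (N+k):ℕ):ℤ)*hd2'
      have := mul_eq_zero.mp h3
      rcases this with h | h
      · exact absurd h hqZ
      · linarith
    have hrealuv : (u (N+k):ℝ)*((v (N+k+1):ℤ):ℝ) = (u (N+k+1):ℝ)*((v (N+k):ℤ):ℝ) := by
      exact_mod_cast huv
    have e : (u (N+k+1):ℝ)*((u (N+k):ℝ)*ξ - ((v (N+k):ℤ):ℝ))
        = (u (N+k):ℝ)*((u (N+k+1):ℝ)*ξ - ((v (N+k+1):ℤ):ℝ)) := by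
      linear_combination hrealuv
    have key : (u (N+k+1):ℝ)*(ε (N+k)) = (u (N+k):ℝ)*(ε (N+k+1)) := by
      have := congrArg abs e
      rw [abs_mul, abs_mul, abs_of_pos (hupos _), abs_of_pos (hupos _)] at this
      rw [hεabs, hεabs]
      exact this
    have hrle := (hN (N+k) (Nat.le_add_right _ _)).1
    have hule : (u (N+k):ℝ) ≤ (u (N+k+1):ℝ) := by
      exact_mod_cast hm (Nat.le_succ (N+k))
    have h1 : (u (N+k):ℝ)*(ε (N+k)) ≤ (u (N+k+1):ℝ)*(ε (N+k)) :=
      mul_le_mul_of_nonneg_right hule (hεpos _).le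
    have h2 : (u (N+k):ℝ)*(ε (N+k)) ≤ (u (N+k):ℝ)*(ε (N+k+1)) := by linarith [key]
    have h3 : ε (N+k) ≤ ε (N+k+1) := (mul_le_mul_iff_right₀ (hupos _)).mp h2
    have h4 : ε (N+k+1) < ε (N+k) :=
      lt_of_le_of_lt hrle (by nlinarith [hεpos (N+k)])
    linarith
  · rw [not_and_or] at hd
    rcases hd with hd | hd
    · exact main (N+k) hk hbound' hd
    · exact main (N+k+1) hεk1 hbound hd

set_option maxHeartbeats 1000000 in
/-- the product of the two exponents is at least 1 -/
lemma prod_ge_one {ξ : ℝ} (hξ : Irrational ξ) {u : ℕ → ℕ} (hm : Monotone u) (hp : ∀ n, 0 < u n)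
    (hα : alphaExp ξ u < 1) (hβ : betaExp u < ⊤) :
    1 ≤ (alphaExp ξ u).toReal * (betaExp u).toReal := by
  have hεpos : ∀ n, 0 < nd ((u n:ℝ)*ξ) := fun n => nd_pos hξ (hp n)
  have hupos : ∀ n, (0:ℝ) < (u n:ℝ) := fun n => by exact_mod_cast hp n
  have h0α : ((0:ℝ) : EReal) ≤ alphaExp ξ u := by
    rw [alphaExp_eq]
    exact le_limsup_coe fun n => div_nonneg (nd_nonneg _) (nd_nonneg _)
  have h1β : ((1:ℝ) : EReal) ≤ betaExp u :=
    le_limsup_coe fun n => (one_le_div (hupos n)).mpr (by exact_mod_cast hm (Nat.le_succ n))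
  have hαtop : alphaExp ξ u ≠ ⊤ := ne_top_of_lt hα
  have hαbot : alphaExp ξ u ≠ ⊥ :=
    (lt_of_lt_of_le (EReal.bot_lt_coe 0) h0α).ne'
  have hβtop : betaExp u ≠ ⊤ := ne_top_of_lt hβ
  have hβbot : betaExp u ≠ ⊥ := (lt_of_lt_of_le (EReal.bot_lt_coe 1) h1β).ne'
  set a : ℝ := (alphaExp ξ u).toReal with ha
  set bb : ℝ := (betaExp u).toReal with hbb
  have hacoe : ((a:ℝ) : EReal) = alphaExp ξ u := EReal.coe_toReal hαtop hαbot
  have hbcoe : ((bb:ℝ) : EReal) = betaExp u := EReal.coe_toReal hβtop hβbot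
  have ha0 : 0 ≤ a := by
    rw [← hacoe] at h0α; exact_mod_cast h0α
  have ha1 : a < 1 := by
    rw [← hacoe] at hα; exact_mod_cast hα
  have hb1 : 1 ≤ bb := by
    rw [← hbcoe] at h1β; exact_mod_cast h1β
  by_contra hcon
  push_neg at hcon
  have hbb0 : 0 < bb := lt_of_lt_of_le one_pos hb1
  have ha1b : a < 1/bb := by
    rw [lt_div_iff₀ hbb0]; linarith
  set a' : ℝ := min ((a + 1/bb)/2) ((a+1)/2) with ha'
  have haa' : a < a' := lt_min (by linarith) (by linarith)
  have ha'1 : a' < 1 := lt_of_le_of_lt (min_le_right _ _) (by linarith)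
  have ha'b : a' < 1/bb := lt_of_le_of_lt (min_le_left _ _) (by linarith)
  have ha'0 : 0 < a' := lt_of_le_of_lt ha0 haa'
  have ha'bb : a'*bb < 1 := by
    have := (lt_div_iff₀ hbb0).mp ha'b
    linarith
  have hbba' : bb < 1/a' := by
    rw [lt_div_iff₀ ha'0]; nlinarith
  set b' : ℝ := (bb + 1/a')/2 with hb'
  have hbb' : bb < b' := by rw [hb']; linarith
  have hb'a : b' < 1/a' := by rw [hb']; linarith
  have ha'b' : a'*b' < 1 := by
    have := (lt_div_iff₀ ha'0).mp hb'a
    linarith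
  have hb'0 : 0 < b' := by linarith
  have hαa' : alphaExp ξ u < ((a':ℝ) : EReal) := by
    rw [← hacoe]; exact_mod_cast haa'
  have hβb' : betaExp u < ((b':ℝ) : EReal) := by
    rw [← hbcoe]; exact_mod_cast hbb'
  rw [alphaExp_eq] at hαa'
  have hev1 := ev_lt_of_limsup_lt hαa'
  have hev2 := ev_lt_of_limsup_lt hβb'
  obtain ⟨N, hN⟩ := eventually_atTop.mp (hev1.and hev2)
  have hNb : ∀ n, N ≤ n → nd ((u (n+1):ℝ)*ξ) ≤ a' * nd ((u n:ℝ)*ξ) ∧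
      ((u (n+1)):ℝ) ≤ b' * (u n:ℝ) := by
    intro n hn
    obtain ⟨h1, h2⟩ := hN n hn
    exact ⟨((div_lt_iff₀ (hεpos n)).mp h1).le, ((div_lt_iff₀ (hupos n)).mp h2).le⟩
  set ε : ℕ → ℝ := fun n => nd ((u n:ℝ)*ξ) with hεdef
  set v : ℕ → ℤ := fun n => round ((u n:ℝ)*ξ) with hvdef
  have hεabs : ∀ i : ℕ, ε i = |(u i:ℝ)*ξ - ((v i:ℤ):ℝ)| := fun i => rfl
  have key : ∀ n, N ≤ n → 1 ≤ (u n:ℝ)*(ε (n+1)) + (u (n+1):ℝ)*(ε n) := by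
    intro n hn
    set d : ℤ := ((u n:ℕ):ℤ)*(v (n+1)) - ((u (n+1):ℕ):ℤ)*(v n) with hd
    have hdne : d ≠ 0 := by
      intro h0
      have huv : ((u n:ℕ):ℤ)*(v (n+1)) = ((u (n+1):ℕ):ℤ)*(v n) := by
        rw [hd] at h0; linarith
      have hrealuv : (u n:ℝ)*((v (n+1):ℤ):ℝ) = (u (n+1):ℝ)*((v n:ℤ):ℝ) := by
        exact_mod_cast huv
      have e : (u (n+1):ℝ)*((u n:ℝ)*ξ - ((v n:ℤ):ℝ))
          = (u n:ℝ)*((u (n+1):ℝ)*ξ - ((v (n+1):ℤ):ℝ)) := by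
        linear_combination hrealuv
      have keyeq : (u (n+1):ℝ)*(ε n) = (u n:ℝ)*(ε (n+1)) := by
        have := congrArg abs e
        rw [abs_mul, abs_mul, abs_of_pos (hupos _), abs_of_pos (hupos _)] at this
        rw [hεabs, hεabs]
        exact this
      have hrle := (hNb n hn).1
      have hule : (u n:ℝ) ≤ (u (n+1):ℝ) := by exact_mod_cast hm (Nat.le_succ n)
      have h1 : (u n:ℝ)*(ε n) ≤ (u (n+1):ℝ)*(ε n) :=
        mul_le_mul_of_nonneg_right hule (hεpos _).le
      have h2 : (u n:ℝ)*(ε n) ≤ (u n:ℝ)*(ε (n+1)) := by linarith [keyeq]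
      have h3 : ε n ≤ ε (n+1) := (mul_le_mul_iff_right₀ (hupos _)).mp h2
      have h4 : ε (n+1) < ε n := lt_of_le_of_lt hrle (by nlinarith [hεpos n])
      linarith
    have h1le : (1:ℝ) ≤ |(d:ℝ)| := by
      have := Int.one_le_abs hdne
      exact_mod_cast this
    have habs : |(d:ℝ)| ≤ (u n:ℝ)*(ε (n+1)) + (u (n+1):ℝ)*(ε n) := by
      have e : (d:ℝ) = (u (n+1):ℝ)*((u n:ℝ)*ξ - ((v n:ℤ):ℝ))
          - (u n:ℝ)*((u (n+1):ℝ)*ξ - ((v (n+1):ℤ):ℝ)) := by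
        rw [hd]; push_cast; ring
      rw [e]
      calc |(u (n+1):ℝ)*((u n:ℝ)*ξ - ((v n:ℤ):ℝ)) - (u n:ℝ)*((u (n+1):ℝ)*ξ - ((v (n+1):ℤ):ℝ))|
          ≤ |(u (n+1):ℝ)*((u n:ℝ)*ξ - ((v n:ℤ):ℝ))| + |(u n:ℝ)*((u (n+1):ℝ)*ξ - ((v (n+1):ℤ):ℝ))| :=
            abs_sub _ _
        _ = (u (n+1):ℝ)*(ε n) + (u n:ℝ)*(ε (n+1)) := by
            rw [abs_mul, abs_mul, abs_of_pos (hupos _), abs_of_pos (hupos _), hεabs, hεabs]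
        _ = (u n:ℝ)*(ε (n+1)) + (u (n+1):ℝ)*(ε n) := by ring
    linarith
  set P : ℕ → ℝ := fun n => (u n:ℝ)*(ε n) with hP
  have hPpos : ∀ n, 0 < P n := fun n => mul_pos (hupos n) (hεpos n)
  have hPlow : ∀ n, N ≤ n → 1 ≤ (a'+b')*P n := by
    intro n hn
    have h1 := key n hn
    have h2 : (u n:ℝ)*(ε (n+1)) ≤ a'*P n := by
      have := (hNb n hn).1
      have h3 : (u n:ℝ)*(ε (n+1)) ≤ (u n:ℝ)*(a'*ε n) :=
        mul_le_mul_of_nonneg_left this (hupos n).le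
      calc (u n:ℝ)*(ε (n+1)) ≤ (u n:ℝ)*(a'*ε n) := h3
        _ = a'*P n := by rw [hP]; ring
    have h4 : (u (n+1):ℝ)*(ε n) ≤ b'*P n := by
      have := (hNb n hn).2
      have h5 : (u (n+1):ℝ)*(ε n) ≤ (b'*(u n:ℝ))*(ε n) :=
        mul_le_mul_of_nonneg_right this (hεpos n).le
      calc (u (n+1):ℝ)*(ε n) ≤ (b'*(u n:ℝ))*(ε n) := h5
        _ = b'*P n := by rw [hP]; ring
    linarith
  have hPdec : ∀ n, N ≤ n → P (n+1) ≤ (a'*b')*P n := by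
    intro n hn
    have h1 := (hNb n hn).1
    have h2 := (hNb n hn).2
    calc P (n+1) = (u (n+1):ℝ)*(ε (n+1)) := rfl
      _ ≤ (b'*(u n:ℝ))*(a'*ε n) := by
          apply mul_le_mul h2 h1 (hεpos _).le
          positivity
      _ = (a'*b')*P n := by rw [hP]; ring
  have hgeomP : ∀ k, P (N+k) ≤ (a'*b')^k * P N := by
    intro k
    induction k with
    | zero => simp
    | succ k ih =>
        have h1 := hPdec (N+k) (Nat.le_add_right _ _)
        have hpk : (0:ℝ) ≤ (a'*b')^k := by positivity
        calc P (N+k+1) ≤ (a'*b')*P (N+k) := h1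
          _ ≤ (a'*b')*((a'*b')^k * P N) := by
              apply mul_le_mul_of_nonneg_left ih (by positivity)
          _ = (a'*b')^(k+1) * P N := by ring
  have hab'0 : 0 < a'+b' := by linarith
  obtain ⟨k, hk⟩ := exists_pow_lt_of_lt_one
    (div_pos (div_pos one_pos hab'0) (hPpos N)) ha'b'
  have h1 := hPlow (N+k) (Nat.le_add_right _ _)
  have h2 := hgeomP k
  have h3 : (a'*b')^k * P N < 1/(a'+b') := (lt_div_iff₀ (hPpos N)).mp hk
  have h4 : (a'+b')*P (N+k) ≤ (a'+b')*((a'*b')^k * P N) :=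
    mul_le_mul_of_nonneg_left h2 hab'0.le
  have h5 : (a'+b')*((a'*b')^k * P N) < (a'+b')*(1/(a'+b')) :=
    (mul_lt_mul_iff_right₀ hab'0).mpr h3
  have h6 : (a'+b')*(1/(a'+b')) = 1 := by field_simp
  linarith

set_option maxHeartbeats 2000000 in
/-- upper bound half of the non-Liouville case -/
lemma densityExponent_le {ξ : ℝ} (hξ : Irrational ξ) (hI : irrationalityExponent ξ ≠ ⊤) :
    ∀ c : ℝ, 0 < c → densityExponent ξ ≤ (c : EReal) := by
  intro c hc0
  have hSne : {x : EReal | ∃ μ : ℝ, x = (μ : EReal) ∧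
      ∀ᶠ q : ℕ in atTop, ∀ p : ℤ, |ξ - (p : ℝ) / (q : ℝ)| > 1 / (q : ℝ) ^ μ}.Nonempty := by
    by_contra h
    rw [Set.not_nonempty_iff_eq_empty] at h
    exact hI (by rw [irrationalityExponent, h, sInf_empty])
  obtain ⟨x0, μ₀, hx0, hev⟩ := hSne
  set M : ℕ := ⌈μ₀⌉₊ + 1 with hM
  have hM1 : 1 ≤ M := Nat.le_add_left 1 _
  have hμM : μ₀ ≤ (M:ℝ) := by
    rcases le_or_gt μ₀ 0 with h | h
    · have : (0:ℝ) ≤ (M:ℝ) := Nat.cast_nonneg M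
      linarith
    · have h1 := Nat.le_ceil μ₀
      have h2 : ((⌈μ₀⌉₊:ℕ):ℝ) ≤ (M:ℝ) := by exact_mod_cast Nat.le_succ _
      linarith
  obtain ⟨Q0, hQ0⟩ := eventually_atTop.mp hev
  have hLB0 : ∀ q : ℕ, max Q0 1 ≤ q → 0 < q → 1/(q:ℝ)^M < nd ((q:ℝ)*ξ) := by
    intro q hq hq0pos
    have hq1 : (1:ℝ) ≤ (q:ℝ) := by
      have : 1 ≤ q := le_trans (le_max_right _ _) hq
      exact_mod_cast this
    have hq0R : (0:ℝ) < (q:ℝ) := by linarith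
    have h := hQ0 q (le_trans (le_max_left _ _) hq) (round ((q:ℝ)*ξ))
    have hrle : (q:ℝ)^μ₀ ≤ (q:ℝ)^((M:ℕ):ℝ) := Real.rpow_le_rpow_of_exponent_le hq1 hμM
    have hMeq : (q:ℝ)^((M:ℕ):ℝ) = (q:ℝ)^(M:ℕ) := Real.rpow_natCast _ _
    have hpow0 : (0:ℝ) < (q:ℝ)^μ₀ := Real.rpow_pos_of_pos hq0R _
    have hd1 : 1/(q:ℝ)^(M:ℕ) ≤ 1/(q:ℝ)^μ₀ := by
      rw [← hMeq]
      exact one_div_le_one_div_of_le hpow0 hrle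
    have heq : nd ((q:ℝ)*ξ) = (q:ℝ)*|ξ - ((round ((q:ℝ)*ξ) : ℤ):ℝ)/(q:ℝ)| := by
      rw [nd, show (q:ℝ)*ξ - ((round ((q:ℝ)*ξ) : ℤ):ℝ)
        = (q:ℝ)*(ξ - ((round ((q:ℝ)*ξ) : ℤ):ℝ)/(q:ℝ)) by field_simp, abs_mul, abs_of_pos hq0R]
    calc 1/(q:ℝ)^(M:ℕ) ≤ 1/(q:ℝ)^μ₀ := hd1
      _ < |ξ - ((round ((q:ℝ)*ξ) : ℤ):ℝ)/(q:ℝ)| := h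
      _ ≤ (q:ℝ)*|ξ - ((round ((q:ℝ)*ξ) : ℤ):ℝ)/(q:ℝ)| := by
          nlinarith [abs_nonneg (ξ - ((round ((q:ℝ)*ξ) : ℤ):ℝ)/(q:ℝ))]
      _ = nd ((q:ℝ)*ξ) := heq.symm
  obtain ⟨cc, hcc0, hcc1, hLB⟩ := lower_bound_exists hξ M (max Q0 1) hLB0
  set d : ℝ := min c 1 with hd
  have hd0 : 0 < d := lt_min hc0 one_pos
  have hd1' : d ≤ 1 := min_le_right _ _
  have hdc : d ≤ c := min_le_left _ _
  have hKR : (2:ℝ) ≤ ((M:ℝ)+1) := by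
    have : (1:ℝ) ≤ (M:ℝ) := by exact_mod_cast hM1
    linarith
  set s : ℝ := d/(8*((M:ℝ)+1)) with hs
  have hs0 : 0 < s := by
    apply div_pos hd0
    linarith
  have hs16 : s ≤ 1/16 := by
    rw [hs, div_le_iff₀ (by linarith)]
    nlinarith
  obtain ⟨u, hm, hp, hrat, hurat⟩ := construction hξ hcc0 hcc1 hLB
    (show 0 < 1-s by linarith) (show 1-s < 1 by linarith) hs0 (show s < 1 by linarith) hs0
  set B2 : ℝ := (1/((1-s)*(1-s)))^(M+1)*(1+s) with hB2
  have hεpos : ∀ n, 0 < nd ((u n:ℝ)*ξ) := fun n => nd_pos hξ (hp n)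
  have hupos : ∀ n, (0:ℝ) < (u n:ℝ) := fun n => by exact_mod_cast hp n
  have hαle : alphaExp ξ u ≤ ((1-s : ℝ) : EReal) := by
    rw [alphaExp_eq]
    apply limsup_coe_le
    intro n
    rw [div_le_iff₀ (hεpos n)]
    exact hrat n
  have hβle : betaExp u ≤ ((B2 : ℝ) : EReal) := by
    apply limsup_coe_le
    intro n
    rw [div_le_iff₀ (hupos n)]
    exact hurat n
  have hα1 : alphaExp ξ u < 1 := by
    refine lt_of_le_of_lt hαle ?_
    exact_mod_cast (show (1-s:ℝ) < 1 by linarith)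
  have hβtop : betaExp u < ⊤ := lt_of_le_of_lt hβle (EReal.coe_lt_top _)
  have hmem : ((Real.log (Real.sqrt ((alphaExp ξ u).toReal * (betaExp u).toReal)) : ℝ) : EReal)
      ∈ {x : EReal | ∃ u : ℕ → ℕ, Monotone u ∧ (∀ n, 0 < u n) ∧
        alphaExp ξ u < 1 ∧ betaExp u < ⊤ ∧
        x = ((Real.log (Real.sqrt ((alphaExp ξ u).toReal * (betaExp u).toReal)) : ℝ) : EReal)} :=
    ⟨u, hm, hp, hα1, hβtop, rfl⟩
  have hle : densityExponent ξ ≤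
      ((Real.log (Real.sqrt ((alphaExp ξ u).toReal * (betaExp u).toReal)) : ℝ) : EReal) :=
    sInf_le hmem
  refine le_trans hle ?_
  rw [EReal.coe_le_coe_iff]
  have h0α : ((0:ℝ) : EReal) ≤ alphaExp ξ u := by
    rw [alphaExp_eq]
    exact le_limsup_coe fun n => div_nonneg (nd_nonneg _) (nd_nonneg _)
  have h0β : ((0:ℝ) : EReal) ≤ betaExp u :=
    le_limsup_coe fun n => div_nonneg (Nat.cast_nonneg _) (Nat.cast_nonneg _)
  have hαbot : alphaExp ξ u ≠ ⊥ := (lt_of_lt_of_le (EReal.bot_lt_coe 0) h0α).ne'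
  have hβbot : betaExp u ≠ ⊥ := (lt_of_lt_of_le (EReal.bot_lt_coe 0) h0β).ne'
  have hαtop : alphaExp ξ u ≠ ⊤ := ne_top_of_lt hα1
  have hβtop' : betaExp u ≠ ⊤ := ne_top_of_lt hβtop
  have hta : (alphaExp ξ u).toReal ≤ 1-s := by
    have := EReal.toReal_le_toReal hαle hαbot (EReal.coe_ne_top _)
    rwa [EReal.toReal_coe] at this
  have htb : (betaExp u).toReal ≤ B2 := by
    have := EReal.toReal_le_toReal hβle hβbot (EReal.coe_ne_top _)
    rwa [EReal.toReal_coe] at this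
  have hta0 : 0 ≤ (alphaExp ξ u).toReal := by
    have := EReal.toReal_le_toReal h0α (EReal.coe_ne_bot _) hαtop
    rwa [EReal.toReal_coe] at this
  have htb0 : 0 ≤ (betaExp u).toReal := by
    have := EReal.toReal_le_toReal h0β (EReal.coe_ne_bot _) hβtop'
    rwa [EReal.toReal_coe] at this
  set P : ℝ := (alphaExp ξ u).toReal * (betaExp u).toReal with hPdef
  have hPle : P ≤ (1-s)*B2 := mul_le_mul hta htb htb0 (by linarith)
  have hBern : 1 - 2*((M:ℝ)+1)*s ≤ ((1-s)*(1-s))^(M+1) := by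
    have h1 := one_add_mul_le_pow (show (-2:ℝ) ≤ -s by linarith) (2*(M+1))
    have h2 : ((1:ℝ) + -s)^(2*(M+1)) = (((1-s)*(1-s)))^(M+1) := by
      rw [show (1:ℝ) + -s = 1 - s by ring, pow_mul, pow_two]
    rw [h2] at h1
    have h3 : ((2*(M+1):ℕ):ℝ) = 2*((M:ℝ)+1) := by push_cast; ring
    rw [h3] at h1
    linarith
  have hKs : 2*((M:ℝ)+1)*s = d/4 := by
    rw [hs]
    field_simp
    ring
  have hX0 : (0:ℝ) < ((1-s)*(1-s))^(M+1) :=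
    pow_pos (mul_pos (by linarith) (by linarith)) _
  have hprod : (1-s)*B2 ≤ 1+d := by
    have hB2eq : (1-s)*B2 = ((1-s)*(1+s))/(((1-s)*(1-s))^(M+1)) := by
      rw [hB2, one_div, inv_pow]
      field_simp
    rw [hB2eq, div_le_iff₀ hX0]
    have h1 : 1 - d/4 ≤ ((1-s)*(1-s))^(M+1) := by linarith
    have h2 : (1+d)*(1 - d/4) ≥ 1 := by nlinarith
    have h3 : (1-s)*(1+s) ≤ 1 := by nlinarith
    nlinarith
  have hP1 : P ≤ 1+d := le_trans hPle hprod
  have hP0 : 0 ≤ P := mul_nonneg hta0 htb0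
  rcases le_or_gt (Real.sqrt P) 1 with hsq | hsq
  · have := Real.log_nonpos (Real.sqrt_nonneg P) hsq
    linarith
  · have h1 : Real.log (Real.sqrt P) ≤ Real.log (Real.sqrt (1+d)) :=
      Real.log_le_log (by linarith) (Real.sqrt_le_sqrt hP1)
    have h2 : Real.log (Real.sqrt (1+d)) = Real.log (1+d)/2 := Real.log_sqrt (by linarith)
    have h3 : Real.log (1+d) ≤ d := by
      have := Real.log_le_sub_one_of_pos (show (0:ℝ) < 1+d by linarith)
      linarith
    linarith

theorem density_exponent_dichotomy (ξ : ℝ) (hξ : Irrational ξ) :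
    (irrationalityExponent ξ = ⊤ → densityExponent ξ = ⊤) ∧
    (irrationalityExponent ξ ≠ ⊤ → densityExponent ξ = 0) := by
  constructor
  · intro hI
    rw [densityExponent, sInf_eq_top]
    rintro x ⟨u, hm, hp, hα, hβ, hx⟩
    exfalso
    obtain ⟨μ, hμ⟩ := exists_mu hξ hm hp hα hβ
    have hle : irrationalityExponent ξ ≤ (μ : EReal) := sInf_le ⟨μ, rfl, hμ⟩
    rw [hI] at hle
    exact (EReal.coe_lt_top μ).not_ge hle
  · intro hI
    have hlow : (0 : EReal) ≤ densityExponent ξ := by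
      apply le_sInf
      rintro x ⟨u, hm, hp, hα, hβ, hx⟩
      rw [hx]
      have h1 := prod_ge_one hξ hm hp hα hβ
      have h2 : 0 ≤ Real.log (Real.sqrt ((alphaExp ξ u).toReal * (betaExp u).toReal)) :=
        Real.log_nonneg (Real.one_le_sqrt.mpr h1)
      exact_mod_cast h2
    refine le_antisymm ?_ hlow
    by_contra hcon
    push_neg at hcon
    obtain ⟨c, hc0, hcd⟩ := EReal.lt_iff_exists_real_btwn.mp hcon
    have hc0R : (0:ℝ) < c := by exact_mod_cast hc0
    exact absurd (densityExponent_le hξ hI c hc0R) (not_le.mpr hcd)
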